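/- Let L be a frame in which every element is the supremum of the compact elements below it and in which the meet of two compact elements is compact (an arithmetic algebraic frame). Write x ≪ y (x is way below y) if for every set S with y ≤ sSup S there is a finite T ⊆ S with x ≤ sSup T. If p ∈ L is pseudoprime, i.e., p ≠ ⊤ and for all a, b ∈ L, a ⊓ b ≪ p implies a ≤ p or b ≤ p, then p is prime: for all a, b ∈ L, a ⊓ b ≤ p implies a ≤ p or b ≤ p. -/

import Mathlib

open CompleteLattice

/-- The way-below relation: `x ≪ y` if for every set `S` with `y ≤ sSup S`
there is a finite `T ⊆ S` with `x ≤ sSup T`. -/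
def WayBelow {L : Type*} [CompleteLattice L] (x y : L) : Prop :=
  ∀ S : Set L, y ≤ sSup S → ∃ T : Set L, T ⊆ S ∧ T.Finite ∧ x ≤ sSup T

/-- In an arithmetic algebraic frame (every element is the sup of the compact
elements below it, and the meet of two compact elements is compact), every
pseudoprime element (`p ≠ ⊤` and `a ⊓ b ≪ p` implies `a ≤ p` or `b ≤ p`)
is prime (`a ⊓ b ≤ p` implies `a ≤ p` or `b ≤ p`). -/
theorem stmt12 {L : Type*} [Order.Frame L]
    (halg : ∀ x : L, x = sSup {k : L | IsCompactElement k ∧ k ≤ x})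
    (harith : ∀ x y : L, IsCompactElement x → IsCompactElement y → IsCompactElement (x ⊓ y))
    (p : L) (hp : p ≠ ⊤)
    (hpseudo : ∀ a b : L, WayBelow (a ⊓ b) p → a ≤ p ∨ b ≤ p) :
    ∀ a b : L, a ⊓ b ≤ p → a ≤ p ∨ b ≤ p := by
  intro a b hab
  by_contra h
  push_neg at h
  obtain ⟨ha, hb⟩ := h
  -- find compact c ≤ a with c ≰ p
  have key : ∀ x : L, ¬ x ≤ p → ∃ c : L, IsCompactElement c ∧ c ≤ x ∧ ¬ c ≤ p := by
    intro x hx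
    by_contra hc
    push_neg at hc
    apply hx
    rw [halg x]
    apply _root_.sSup_le
    rintro k ⟨hk, hkx⟩
    exact hc k hk hkx
  obtain ⟨c, hcC, hca, hcp⟩ := key a ha
  obtain ⟨d, hdC, hdb, hdp⟩ := key b hb
  have hcd : IsCompactElement (c ⊓ d) := harith c d hcC hdC
  have hle : c ⊓ d ≤ p := le_trans (inf_le_inf hca hdb) hab
  have hwb : WayBelow (c ⊓ d) p := by
    intro S hS
    obtain ⟨t, hts, hle2⟩ := (isCompactElement_iff_exists_le_sSup_of_le_sSup (k := c ⊓ d)).1 hcd S (hle.trans hS)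
    exact ⟨↑t, hts, t.finite_toSet, by rwa [← Finset.sup_id_eq_sSup]⟩
  rcases hpseudo c d hwb with h | h
  · exact hcp h
  · exact hdp h
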